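/- arXiv:2502.04368 — 2 statements merged into one kernel-verified Lean document; each statement's English description precedes it below -/
import Mathlib

section
/- Let V be a finite-dimensional real inner product space, K a compact group acting on V by linear isometries, with Haar probability measure dk. For λ ∈ V define φ_λ(X) = ∫_K exp(i⟨λ, k·X⟩) dk. Then for all X, Y ∈ V, ∫_K φ_λ(X + k·Y) dk = φ_λ(X) · φ_λ(Y). -/
open MeasureTheory
open scoped RealInnerProductSpace

/-- Spherical functional equation for the motion-group pair `(V ⋊ K, K)`. -/
theorem spherical_functional_equation
    {V K : Type*}
    [NormedAddCommGroup V] [InnerProductSpace ℝ V] [FiniteDimensional ℝ V]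
    [Group K] [TopologicalSpace K] [IsTopologicalGroup K] [CompactSpace K]
    [MeasurableSpace K] [BorelSpace K]
    (μ : Measure K) [μ.IsHaarMeasure] [IsProbabilityMeasure μ]
    (π : K →* (V ≃ₗᵢ[ℝ] V))
    (hπ : Continuous fun p : K × V => π p.1 p.2)
    (l : V) (φ : V → ℂ)
    (hφ : ∀ X : V, φ X = ∫ k, Complex.exp (Complex.I * (⟪l, π k X⟫ : ℝ)) ∂μ) :
    ∀ X Y : V, (∫ k, φ (X + π k Y) ∂μ) = φ X * φ Y := by
  intro X Y
  have horb : ∀ Z : V, Continuous fun k : K => π k Z := fun Z =>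
    hπ.comp (continuous_id.prodMk continuous_const)
  set f : K → ℂ := (fun h => Complex.exp (Complex.I * (⟪l, π h X⟫ : ℝ))) with hf
  set g : K → ℂ := (fun a => Complex.exp (Complex.I * (⟪l, π a Y⟫ : ℝ))) with hg
  have hcont : ∀ Z : V, Continuous fun k : K => Complex.exp (Complex.I * (⟪l, π k Z⟫ : ℝ)) := by
    intro Z
    exact Complex.continuous_exp.comp
      (continuous_const.mul (Complex.continuous_ofReal.comp
        (continuous_const.inner (horb Z))))
  have hcf : Continuous f := hcont X
  have hcg : Continuous g := hcont Y
  have key : ∀ (k h : K),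
      Complex.exp (Complex.I * (⟪l, π h (X + π k Y)⟫ : ℝ)) = f h * g (h * k) := by
    intro k h
    have h1 : π h (X + π k Y) = π h X + π (h * k) Y := by
      rw [map_add, map_mul]; rfl
    rw [hf, hg]
    simp only
    rw [h1, inner_add_right, ← Complex.exp_add]
    push_cast
    ring_nf
  -- the `C(K, ℂ)`-valued function `F h = (k ↦ f h * g (h * k))`
  have hGc : Continuous fun p : K × K => f p.1 * g (p.1 * p.2) :=
    (hcf.comp continuous_fst).mul (hcg.comp (continuous_fst.mul continuous_snd))
  set G : C(K × K, ℂ) := ⟨fun p => f p.1 * g (p.1 * p.2), hGc⟩ with hG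
  set F : K → C(K, ℂ) := fun h => G.curry h with hF
  have hFc : Continuous F := G.curry.continuous
  have hFint : Integrable F μ :=
    hFc.integrable_of_hasCompactSupport ((isClosed_tsupport _).isCompact)
  have int_cm : ∀ q : C(K, ℂ), Integrable (⇑q) μ := fun q =>
    q.continuous.integrable_of_hasCompactSupport ((isClosed_tsupport _).isCompact)
  -- integration against μ as a continuous linear functional on C(K, ℂ)
  set L0 : C(K, ℂ) →ₗ[ℂ] ℂ :=
    { toFun := fun q => ∫ k, q k ∂μ
      map_add' := fun a b => by
        simp only [ContinuousMap.coe_add, Pi.add_apply]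
        exact integral_add (int_cm a) (int_cm b)
      map_smul' := fun c q => by
        simp only [ContinuousMap.coe_smul, Pi.smul_apply, RingHom.id_apply]
        exact integral_smul c _ } with hL0
  have hL0bound : ∀ q : C(K, ℂ), ‖L0 q‖ ≤ 1 * ‖q‖ := by
    intro q
    rw [one_mul]
    calc ‖∫ k, q k ∂μ‖ ≤ ∫ k, ‖q k‖ ∂μ := norm_integral_le_integral_norm _
      _ ≤ ∫ _k, ‖q‖ ∂μ :=
        integral_mono (int_cm q).norm (integrable_const _) fun k => q.norm_coe_le_norm k
      _ = ‖q‖ := by simp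
  set L : C(K, ℂ) →L[ℂ] ℂ := L0.mkContinuous 1 hL0bound with hL
  have hLapp : ∀ q : C(K, ℂ), L q = ∫ k, q k ∂μ := fun q => rfl
  -- evaluation of the vector-valued integral
  have hIF : ∀ k : K, (∫ h, F h ∂μ) k = ∫ h, f h * g (h * k) ∂μ := by
    intro k
    have h1 := (ContinuousMap.evalCLM ℂ k).integral_comp_comm hFint
    have h2 : ∀ h : K, (ContinuousMap.evalCLM ℂ k) (F h) = f h * g (h * k) := fun h => rfl
    have h3 : (ContinuousMap.evalCLM ℂ k) (∫ h, F h ∂μ) = (∫ h, F h ∂μ) k := rfl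
    rw [h3] at h1
    rw [← h1]
    exact integral_congr_ae (Filter.Eventually.of_forall fun h => (h2 h).symm)
  calc ∫ k, φ (X + π k Y) ∂μ
      = ∫ k, (∫ h, F h ∂μ) k ∂μ := by
        refine integral_congr_ae (Filter.Eventually.of_forall fun k => ?_)
        simp only
        rw [hφ (X + π k Y), hIF k]
        exact integral_congr_ae (Filter.Eventually.of_forall fun h => key k h)
    _ = L (∫ h, F h ∂μ) := (hLapp _).symm
    _ = ∫ h, L (F h) ∂μ := (L.integral_comp_comm hFint).symm
    _ = ∫ h, f h * φ Y ∂μ := by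
        refine integral_congr_ae (Filter.Eventually.of_forall fun h => ?_)
        simp only
        rw [hLapp (F h)]
        have h4 : ∀ k : K, (F h) k = f h * g (h * k) := fun k => rfl
        calc ∫ k, (F h) k ∂μ = ∫ k, f h * g (h * k) ∂μ :=
              integral_congr_ae (Filter.Eventually.of_forall fun k => h4 k)
          _ = f h * ∫ k, g (h * k) ∂μ := integral_const_mul _ _
          _ = f h * φ Y := by
              rw [hφ Y]
              congr 1
              exact integral_mul_left_eq_self (μ := μ) g h
    _ = φ X * φ Y := by rw [integral_mul_const, hφ X]
end

section
/- Let Σ be a finite root system in a Euclidean space E with positive system Σ⁺, simple roots Δ = {α₁, …, α_ℓ}, and multiplicities m(α) ∈ ℕ≥1. Write each α ∈ Σ⁺ as α = ∑_i n_i(α) α_i with n_i(α) ∈ ℕ. Then the infimum over nonzero λ ∈ E of ∑_{α∈Σ⁺, ⟨α,λ⟩≠0} m(α) equals the minimum over 1 ≤ i ≤ ℓ of ∑_{α∈Σ⁺, n_i(α)≥1} m(α). -/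
open scoped RealInnerProductSpace Classical

/-- Reflection in the hyperplane orthogonal to `v`. -/
noncomputable def simpleRefl {E : Type*} [NormedAddCommGroup E] [InnerProductSpace ℝ E]
    (v x : E) : E := x - (2 * ⟪x, v⟫ / ⟪v, v⟫) • v

section auxrefl
variable {E : Type*} [NormedAddCommGroup E] [InnerProductSpace ℝ E]

lemma simpleRefl_symm (v x y : E) : ⟪simpleRefl v x, y⟫ = ⟪x, simpleRefl v y⟫ := by
  simp only [simpleRefl, inner_sub_left, inner_sub_right, real_inner_smul_left,
    real_inner_smul_right]
  rw [real_inner_comm v y]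
  ring

lemma simpleRefl_inner_self (v : E) (hv : v ≠ 0) (x : E) :
    ⟪simpleRefl v x, v⟫ = -⟪x, v⟫ := by
  have hd : ⟪v, v⟫ ≠ 0 := fun h => hv (inner_self_eq_zero.mp h)
  simp only [simpleRefl, inner_sub_left, real_inner_smul_left]
  rw [div_mul_cancel₀ _ hd]
  ring

lemma simpleRefl_invol (v : E) (hv : v ≠ 0) (x : E) :
    simpleRefl v (simpleRefl v x) = x := by
  have h1 := simpleRefl_inner_self v hv x
  conv_lhs => rw [simpleRefl, h1]
  rw [simpleRefl]
  simp only [mul_neg, neg_div, neg_smul, sub_neg_eq_add, sub_add_cancel]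

lemma simpleRefl_neg (v x : E) : simpleRefl v (-x) = -simpleRefl v x := by
  simp only [simpleRefl, inner_neg_left, mul_neg, neg_div, neg_smul, sub_neg_eq_add]
  module

lemma simpleRefl_self (v : E) (hv : v ≠ 0) : simpleRefl v v = -v := by
  have hd : ⟪v, v⟫ ≠ 0 := fun h => hv (inner_self_eq_zero.mp h)
  rw [simpleRefl, mul_div_assoc, div_self hd, mul_one, two_smul]
  module

lemma simpleRefl_zero (v : E) : simpleRefl v 0 = 0 := by
  simp [simpleRefl]

end auxrefl

/-- The infimum over nonzero `λ` of `n(λ) = ∑_{α ∈ Σ⁺, ⟨α,λ⟩ ≠ 0} m(α)` equals the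
minimum over simple roots `αᵢ` of `∑_{α ∈ Σ⁺, nᵢ(α) ≥ 1} m(α)` (equation (3.2) of the
paper, defining `2κ(G)`). -/
theorem inf_n_lambda_eq_min_over_simple_roots
    {E : Type*} [NormedAddCommGroup E] [InnerProductSpace ℝ E] [FiniteDimensional ℝ E]
    {ℓ : ℕ} (hℓ : 0 < ℓ)
    (b : Module.Basis (Fin ℓ) ℝ E)             -- the simple roots, a basis of E
    (Splus : Finset E)                    -- the positive roots
    (hsimple : ∀ i, b i ∈ Splus)
    (h0 : (0 : E) ∉ Splus)
    (m : E → ℕ) (hm1 : ∀ α ∈ Splus, 1 ≤ m α)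
    (n : E → Fin ℓ → ℕ)                  -- coefficients of positive roots on simple roots
    (hn : ∀ α ∈ Splus, α = ∑ i, (n α i : ℝ) • b i)
    -- the set Σ = Σ⁺ ∪ (−Σ⁺) is stable under the simple reflections:
    (hrefl : ∀ i, ∀ α ∈ Splus,
      (α - (2 * ⟪α, b i⟫ / ⟪b i, b i⟫) • b i ∈ Splus ∨
        -(α - (2 * ⟪α, b i⟫ / ⟪b i, b i⟫) • b i) ∈ Splus))
    -- the multiplicities are invariant under the simple reflections:
    (hminv : ∀ i, ∀ α ∈ Splus,
      m (α - (2 * ⟪α, b i⟫ / ⟪b i, b i⟫) • b i) = m α ∧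
      m (-(α - (2 * ⟪α, b i⟫ / ⟪b i, b i⟫) • b i)) = m α) :
    sInf {k : ℕ | ∃ lam : E, lam ≠ 0 ∧
        k = ∑ α ∈ Splus.filter (fun α => ⟪α, lam⟫ ≠ 0), m α}
      = Finset.univ.inf' ⟨⟨0, hℓ⟩, Finset.mem_univ _⟩
          (fun i => ∑ α ∈ Splus.filter (fun α => 1 ≤ n α i), m α) := by
  classical
  have hbne : ∀ i, b i ≠ 0 := fun i => b.ne_zero i
  have hrefl' : ∀ i, ∀ α ∈ Splus,
      simpleRefl (b i) α ∈ Splus ∨ -(simpleRefl (b i) α) ∈ Splus := hrefl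
  have hminv' : ∀ i, ∀ α ∈ Splus,
      m (simpleRefl (b i) α) = m α ∧ m (-(simpleRefl (b i) α)) = m α := hminv
  -- coordinates of positive roots
  have hrepr : ∀ α ∈ Splus, ∀ j, b.repr α j = (n α j : ℝ) := by
    intro α hα j
    conv_lhs => rw [hn α hα]
    exact congrFun (b.repr_sum_self fun i => (n α i : ℝ)) j
  -- Splus does not contain opposite pairs
  have hnegmem : ∀ α ∈ Splus, -α ∉ Splus := by
    intro α hα hneg
    have hzero : ∀ j, (n α j : ℝ) = 0 := by
      intro j
      have h1 : b.repr α j = (n α j : ℝ) := hrepr α hα j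
      have h2 : b.repr (-α) j = (n (-α) j : ℝ) := hrepr _ hneg j
      have h3 : b.repr (-α) j = -(b.repr α j) := by simp
      have h4 : (0:ℝ) ≤ (n α j : ℝ) := Nat.cast_nonneg _
      have h5 : (0:ℝ) ≤ (n (-α) j : ℝ) := Nat.cast_nonneg _
      linarith [h1, h2, h3]
    apply h0
    have : α = 0 := by
      rw [hn α hα]
      exact Finset.sum_eq_zero fun i _ => by rw [hzero i, zero_smul]
    rwa [this] at hα
  -- coordinates away from i are unchanged by the i-th reflection
  have hrepr_s : ∀ (i : Fin ℓ) (α : E) (j : Fin ℓ), j ≠ i →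
      b.repr (simpleRefl (b i) α) j = b.repr α j := by
    intro i α j hj
    simp only [simpleRefl, map_sub, map_smul, Finsupp.coe_sub, Finsupp.coe_smul, Pi.sub_apply,
      Pi.smul_apply, Module.Basis.repr_self, Finsupp.single_apply, smul_eq_mul]
    rw [if_neg (fun h => hj h.symm)]
    ring
  -- if α has a coefficient on some other simple root, its reflection stays positive
  have hsP : ∀ (i : Fin ℓ) (α : E), α ∈ Splus → ∀ j, j ≠ i → 1 ≤ n α j →
      simpleRefl (b i) α ∈ Splus := by
    intro i α hα j hj hnj
    rcases hrefl' i α hα with h | h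
    · exact h
    · exfalso
      have h2 : b.repr (-(simpleRefl (b i) α)) j = (n (-(simpleRefl (b i) α)) j : ℝ) :=
        hrepr _ h j
      have h3 : b.repr (-(simpleRefl (b i) α)) j = -(b.repr α j) := by
        rw [map_neg, Finsupp.neg_apply, hrepr_s i α j hj]
      have h4 : b.repr α j = (n α j : ℝ) := hrepr α hα j
      have h5 : (1:ℝ) ≤ (n α j : ℝ) := by exact_mod_cast hnj
      have h6 : (0:ℝ) ≤ (n (-(simpleRefl (b i) α)) j : ℝ) := Nat.cast_nonneg _
      linarith [h2, h3]
  -- the "sign-corrected" reflection on Splus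
  set sig : Fin ℓ → E → E := fun i α =>
    if simpleRefl (b i) α ∈ Splus then simpleRefl (b i) α else -(simpleRefl (b i) α) with hsig
  have hsig_mem : ∀ i α, α ∈ Splus → sig i α ∈ Splus := by
    intro i α hα
    rw [hsig]; dsimp only
    split_ifs with h
    · exact h
    · exact (hrefl' i α hα).resolve_left h
  have hsig_m : ∀ i α, α ∈ Splus → m (sig i α) = m α := by
    intro i α hα
    rw [hsig]; dsimp only
    split_ifs
    · exact (hminv' i α hα).1
    · exact (hminv' i α hα).2
  have hsig_invol : ∀ i α, α ∈ Splus → sig i (sig i α) = α := by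
    intro i α hα
    by_cases h : simpleRefl (b i) α ∈ Splus
    · have e1 : sig i α = simpleRefl (b i) α := by simp only [hsig]; rw [if_pos h]
      rw [e1, hsig]; dsimp only
      rw [simpleRefl_invol (b i) (hbne i), if_pos hα]
    · have e1 : sig i α = -(simpleRefl (b i) α) := by simp only [hsig]; rw [if_neg h]
      rw [e1, hsig]; dsimp only
      rw [simpleRefl_neg, simpleRefl_invol (b i) (hbne i),
        if_neg (hnegmem α hα), neg_neg]
  have hsig_inner : ∀ i α (lam : E), α ∈ Splus →
      (⟪sig i α, lam⟫ ≠ 0 ↔ ⟪α, simpleRefl (b i) lam⟫ ≠ 0) := by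
    intro i α lam hα
    rw [← simpleRefl_symm (b i) α lam, hsig]; dsimp only
    split_ifs with h
    · exact Iff.rfl
    · simp [inner_neg_left]
  -- invariance of n(λ) under the reflections
  have hnsum_inv : ∀ (i : Fin ℓ) (lam : E),
      ∑ α ∈ Splus.filter (fun α => ⟪α, simpleRefl (b i) lam⟫ ≠ 0), m α
        = ∑ α ∈ Splus.filter (fun α => ⟪α, lam⟫ ≠ 0), m α := by
    intro i lam
    apply Finset.sum_nbij' (i := fun α => sig i α) (j := fun α => sig i α)
    · intro a ha
      rw [Finset.mem_filter] at ha ⊢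
      exact ⟨hsig_mem i a ha.1, (hsig_inner i a lam ha.1).mpr ha.2⟩
    · intro a ha
      rw [Finset.mem_filter] at ha ⊢
      refine ⟨hsig_mem i a ha.1, ?_⟩
      have h2 : ⟪a, simpleRefl (b i) (simpleRefl (b i) lam)⟫ ≠ 0 := by
        rw [simpleRefl_invol (b i) (hbne i)]; exact ha.2
      exact (hsig_inner i a (simpleRefl (b i) lam) ha.1).mpr h2
    · intro a ha; exact hsig_invol i a (Finset.mem_filter.mp ha).1
    · intro a ha; exact hsig_invol i a (Finset.mem_filter.mp ha).1
    · intro a ha; exact (hsig_m i a (Finset.mem_filter.mp ha).1).symm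
  -- a nonzero vector has nonzero pairing with some simple root
  have hlam_ne : ∀ lam : E, lam ≠ 0 → ∃ i, ⟪b i, lam⟫ ≠ 0 := by
    intro lam hlam
    by_contra hc
    push_neg at hc
    apply hlam
    have h2 : ⟪lam, lam⟫ = (0:ℝ) := by
      nth_rewrite 1 [← b.sum_repr lam]
      rw [sum_inner]
      exact Finset.sum_eq_zero fun i _ => by rw [real_inner_smul_left, hc i, mul_zero]
    exact inner_self_eq_zero.mp h2
  have hinner_expand : ∀ α ∈ Splus, ∀ lam : E,
      ⟪α, lam⟫ = ∑ j, (n α j : ℝ) * ⟪b j, lam⟫ := by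
    intro α hα lam
    nth_rewrite 1 [hn α hα]
    rw [sum_inner]
    exact Finset.sum_congr rfl fun j _ => real_inner_smul_left _ _ _
  -- the dominant case
  have hdom : ∀ lam : E, lam ≠ 0 → (∀ i, 0 ≤ ⟪b i, lam⟫) →
      Finset.univ.inf' ⟨⟨0, hℓ⟩, Finset.mem_univ _⟩
          (fun i => ∑ α ∈ Splus.filter (fun α => 1 ≤ n α i), m α)
        ≤ ∑ α ∈ Splus.filter (fun α => ⟪α, lam⟫ ≠ 0), m α := by
    intro lam hlam hpos
    obtain ⟨i, hi⟩ := hlam_ne lam hlam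
    have hipos : 0 < ⟪b i, lam⟫ := lt_of_le_of_ne (hpos i) (Ne.symm hi)
    refine le_trans (Finset.inf'_le _ (Finset.mem_univ i)) ?_
    apply Finset.sum_le_sum_of_subset
    intro α hα
    rw [Finset.mem_filter] at hα ⊢
    refine ⟨hα.1, ?_⟩
    have h1 : 0 < ⟪α, lam⟫ := by
      rw [hinner_expand α hα.1 lam]
      apply Finset.sum_pos'
      · intro j _; exact mul_nonneg (Nat.cast_nonneg _) (hpos j)
      · refine ⟨i, Finset.mem_univ i, ?_⟩
        have h2 : (1:ℝ) ≤ (n α i : ℝ) := by exact_mod_cast hα.2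
        nlinarith
    exact ne_of_gt h1
  -- the main lower bound, by descent on the number of negative roots
  have main : ∀ N : ℕ, ∀ lam : E, lam ≠ 0 →
      (Splus.filter (fun α => ⟪α, lam⟫ < 0)).card ≤ N →
      Finset.univ.inf' ⟨⟨0, hℓ⟩, Finset.mem_univ _⟩
          (fun i => ∑ α ∈ Splus.filter (fun α => 1 ≤ n α i), m α)
        ≤ ∑ α ∈ Splus.filter (fun α => ⟪α, lam⟫ ≠ 0), m α := by
    intro N
    induction N with
    | zero =>
      intro lam hlam hcard
      by_cases hc : ∀ i, 0 ≤ ⟪b i, lam⟫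
      · exact hdom lam hlam hc
      · exfalso
        push_neg at hc
        obtain ⟨i, hi⟩ := hc
        have hmem : b i ∈ Splus.filter (fun α => ⟪α, lam⟫ < 0) :=
          Finset.mem_filter.mpr ⟨hsimple i, hi⟩
        have := Finset.card_pos.mpr ⟨b i, hmem⟩
        omega
    | succ N ih =>
      intro lam hlam hcard
      by_cases hc : ∀ i, 0 ≤ ⟪b i, lam⟫
      · exact hdom lam hlam hc
      · push_neg at hc
        obtain ⟨i, hi⟩ := hc
        have hbpos : 0 < ⟪b i, simpleRefl (b i) lam⟫ := by
          rw [← simpleRefl_symm (b i) (b i) lam, simpleRefl_self (b i) (hbne i),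
            inner_neg_left]
          linarith
        have hlam' : simpleRefl (b i) lam ≠ 0 := by
          intro h
          apply hlam
          rw [← simpleRefl_invol (b i) (hbne i) lam, h, simpleRefl_zero]
        have hdec : (Splus.filter (fun α => ⟪α, simpleRefl (b i) lam⟫ < 0)).card
            < (Splus.filter (fun α => ⟪α, lam⟫ < 0)).card := by
          set A := Splus.filter (fun α => ⟪α, simpleRefl (b i) lam⟫ < 0) with hA
          set B := Splus.filter (fun α => ⟪α, lam⟫ < 0) with hB
          have himg : ∀ α ∈ A, simpleRefl (b i) α ∈ B.erase (b i) := by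
            intro α hαA
            rw [hA, Finset.mem_filter] at hαA
            obtain ⟨hαS, hαneg⟩ := hαA
            have hP : ∃ j, j ≠ i ∧ 1 ≤ n α j := by
              by_contra hq
              push_neg at hq
              have hα_eq : α = (n α i : ℝ) • b i := by
                conv_lhs => rw [hn α hαS]
                exact Finset.sum_eq_single i
                  (fun j _ hji => by
                    have hz : n α j = 0 := by have := hq j hji; omega
                    rw [hz]; simp)
                  (fun h => absurd (Finset.mem_univ i) h)
              have h5 : ⟪α, simpleRefl (b i) lam⟫
                  = (n α i : ℝ) * ⟪b i, simpleRefl (b i) lam⟫ := by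
                conv_lhs => rw [hα_eq]
                rw [real_inner_smul_left]
              have h6 : 0 ≤ ⟪α, simpleRefl (b i) lam⟫ := by
                rw [h5]
                exact mul_nonneg (Nat.cast_nonneg _) (le_of_lt hbpos)
              linarith
            obtain ⟨j, hji, hnj⟩ := hP
            have hsα : simpleRefl (b i) α ∈ Splus := hsP i α hαS j hji hnj
            rw [Finset.mem_erase]
            constructor
            · intro he
              have hαeq : α = -(b i) := by
                rw [← simpleRefl_invol (b i) (hbne i) α, he, simpleRefl_self (b i) (hbne i)]
              rw [hαeq] at hαS
              exact hnegmem (b i) (hsimple i) hαS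
            · rw [hB, Finset.mem_filter]
              refine ⟨hsα, ?_⟩
              rw [simpleRefl_symm]
              exact hαneg
          have hbiB : b i ∈ B := by
            rw [hB, Finset.mem_filter]; exact ⟨hsimple i, hi⟩
          have hinjA : Set.InjOn (simpleRefl (b i)) A := by
            intro x _ y _ h
            have h2 := congrArg (simpleRefl (b i)) h
            rwa [simpleRefl_invol (b i) (hbne i), simpleRefl_invol (b i) (hbne i)] at h2
          calc A.card = (A.image (simpleRefl (b i))).card :=
                (Finset.card_image_of_injOn hinjA).symm
            _ ≤ (B.erase (b i)).card := by
                apply Finset.card_le_card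
                intro x hx
                obtain ⟨a, ha, rfl⟩ := Finset.mem_image.mp hx
                exact himg a ha
            _ < B.card := Finset.card_erase_lt_of_mem hbiB
        have hcard' : (Splus.filter (fun α => ⟪α, simpleRefl (b i) lam⟫ < 0)).card ≤ N := by
          omega
        have h7 := ih (simpleRefl (b i) lam) hlam' hcard'
        rwa [hnsum_inv i lam] at h7
  -- each M_i is attained (fundamental coweight)
  have hMmem : ∀ i : Fin ℓ, (∑ α ∈ Splus.filter (fun α => 1 ≤ n α i), m α) ∈
      {k : ℕ | ∃ lam : E, lam ≠ 0 ∧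
        k = ∑ α ∈ Splus.filter (fun α => ⟪α, lam⟫ ≠ 0), m α} := by
    intro i
    set f : E →L[ℝ] ℝ := LinearMap.toContinuousLinearMap (b.coord i) with hf
    set lam : E := (InnerProductSpace.toDual ℝ E).symm f with hlamdef
    have hlam_app : ∀ y : E, ⟪lam, y⟫ = b.repr y i := by
      intro y
      rw [hlamdef, InnerProductSpace.toDual_symm_apply]
      rfl
    have hlam0 : lam ≠ 0 := by
      intro h
      have h1 : ⟪lam, b i⟫ = b.repr (b i) i := hlam_app (b i)
      rw [h, inner_zero_left, Module.Basis.repr_self] at h1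
      simp at h1
    refine ⟨lam, hlam0, ?_⟩
    have hfe : Splus.filter (fun α => 1 ≤ n α i)
        = Splus.filter (fun α => ⟪α, lam⟫ ≠ 0) := by
      apply Finset.filter_congr
      intro α hα
      have h2 : ⟪α, lam⟫ = (n α i : ℝ) := by
        rw [real_inner_comm, hlam_app, hrepr α hα]
      rw [h2]
      simp [Nat.cast_ne_zero, Nat.one_le_iff_ne_zero]
    rw [hfe]
  -- conclude
  apply le_antisymm
  · obtain ⟨i₀, -, hmin⟩ := Finset.exists_mem_eq_inf'
      (⟨⟨0, hℓ⟩, Finset.mem_univ _⟩ : (Finset.univ : Finset (Fin ℓ)).Nonempty)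
      (fun i => ∑ α ∈ Splus.filter (fun α => 1 ≤ n α i), m α)
    rw [hmin]
    exact Nat.sInf_le (hMmem i₀)
  · apply le_csInf ⟨_, hMmem ⟨0, hℓ⟩⟩
    rintro k ⟨lam, hlam, rfl⟩
    exact main _ lam hlam le_rfl
end
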